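/- arXiv:2206.09451 — 5 statements merged into one kernel-verified Lean document; each statement's English description precedes it below -/
import Mathlib

section
/- Suppose X has the FOED property with function F and let μ_t denote the law of X_t. Then for 0 ≤ s < t, μ_t(dz) = μ_s(dz) · exp(∫ₛᵗ F(u,z) du); in particular μ_t is absolutely continuous with respect to μ_s with Radon–Nikodym derivative dμ_t/dμ_s(z) = exp(∫ₛᵗ F(u,z) du). -/
open MeasureTheory

/-- If `X` has the FOED property with function `F` and `μ_t` is the law of `X_t`, then for
`0 ≤ s < t` one has `μ_t(dz) = μ_s(dz) exp(∫ₛᵗ F(u,z) du)`, i.e. `μ_t` is the measure with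
density `exp(∫ₛᵗ F(u,·) du)` with respect to `μ_s`. -/
theorem stmt_2 {Ω E : Type*} [MeasurableSpace Ω] [MeasurableSpace E]
    (P : Measure Ω) [IsProbabilityMeasure P]
    (X : ℝ → Ω → E) (hX : ∀ t, Measurable (X t))
    (F : ℝ → E → ℝ) (hF : Measurable (Function.uncurry F))
    (hFloc : ∀ x : E, ∀ t ≥ (0:ℝ), IntervalIntegrable (fun u => F u x) volume 0 t)
    (hFOED : ∀ f : E → ℝ, Measurable f → (∃ C, ∀ x, |f x| ≤ C) → ∀ t ≥ (0:ℝ),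
      ∫ ω, f (X t ω) ∂P
        = ∫ ω, f (X 0 ω) * Real.exp (∫ u in (0:ℝ)..t, F u (X 0 ω)) ∂P) :
    ∀ s t : ℝ, 0 ≤ s → s < t →
      P.map (X t)
        = (P.map (X s)).withDensity
            (fun z => ENNReal.ofReal (Real.exp (∫ u in s..t, F u z))) := by
  -- measurability of the parametrized interval integral
  have hI : ∀ a b : ℝ, Measurable fun z : E => ∫ u in a..b, F u z := by
    intro a b
    have h1 : ∀ c d : ℝ, Measurable fun z : E => ∫ u in Set.Ioc c d, F u z := by
      intro c d
      have hswap : StronglyMeasurable fun p : E × ℝ => F p.2 p.1 :=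
        (hF.comp measurable_swap).stronglyMeasurable
      exact (hswap.integral_prod_right' (ν := volume.restrict (Set.Ioc c d))).measurable
    have : (fun z : E => ∫ u in a..b, F u z)
        = fun z => (∫ u in Set.Ioc a b, F u z) - ∫ u in Set.Ioc b a, F u z := by
      funext z; rw [intervalIntegral]
    rw [this]
    exact (h1 a b).sub (h1 b a)
  -- integrability of the exponential weight
  have hW : ∀ t : ℝ, 0 ≤ t →
      Integrable (fun ω => Real.exp (∫ u in (0:ℝ)..t, F u (X 0 ω))) P := by
    intro t ht
    by_contra h
    have h1 := hFOED (fun _ => 1) measurable_const ⟨1, fun x => by simp⟩ t ht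
    simp only [one_mul] at h1
    rw [integral_undef h] at h1
    simp at h1
  -- lintegral form of the FOED property for bounded nonnegative f
  have key : ∀ f : E → ℝ, Measurable f → (∀ x, 0 ≤ f x) → (∃ C, ∀ x, |f x| ≤ C) →
      ∀ t : ℝ, 0 ≤ t →
      (∫⁻ ω, ENNReal.ofReal (f (X t ω)) ∂P)
        = ∫⁻ ω, ENNReal.ofReal
            (f (X 0 ω) * Real.exp (∫ u in (0:ℝ)..t, F u (X 0 ω))) ∂P := by
    intro f hfm hf0 hfb t ht
    obtain ⟨C, hC⟩ := hfb
    have hint1 : Integrable (fun ω => f (X t ω)) P := by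
      refine Integrable.mono' (integrable_const C) ((hfm.comp (hX t)).aestronglyMeasurable) ?_
      filter_upwards with ω using by simpa [Real.norm_eq_abs] using hC (X t ω)
    have hint2 : Integrable
        (fun ω => f (X 0 ω) * Real.exp (∫ u in (0:ℝ)..t, F u (X 0 ω))) P := by
      exact Integrable.bdd_mul (hW t ht) ((hfm.comp (hX 0)).aestronglyMeasurable)
        (c := C) (Filter.Eventually.of_forall fun ω => by simpa [Real.norm_eq_abs] using hC (X 0 ω))
    rw [← ofReal_integral_eq_lintegral_ofReal hint1
        (Filter.Eventually.of_forall fun ω => hf0 _),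
      ← ofReal_integral_eq_lintegral_ofReal hint2
        (Filter.Eventually.of_forall fun ω => mul_nonneg (hf0 _) (Real.exp_nonneg _)),
      hFOED f hfm ⟨C, hC⟩ t ht]
  intro s t hs hst
  have ht : (0:ℝ) ≤ t := le_trans hs hst.le
  -- additivity of the interval integral
  have hadd : ∀ z : E,
      (∫ u in (0:ℝ)..s, F u z) + (∫ u in s..t, F u z) = ∫ u in (0:ℝ)..t, F u z := by
    intro z
    refine intervalIntegral.integral_add_adjacent_intervals (hFloc z s hs) ?_
    refine (hFloc z t ht).mono_set ?_
    exact Set.uIcc_subset_uIcc (Set.mem_uIcc.mpr (Or.inl ⟨hs, hst.le⟩))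
      (Set.mem_uIcc.mpr (Or.inl ⟨ht, le_rfl⟩))
  ext A hA
  rw [Measure.map_apply (hX t) hA, withDensity_apply _ hA,
    Measure.restrict_map (hX s) hA,
    lintegral_map (Measurable.ennreal_ofReal (Measurable.exp (hI s t))) (hX s),
    ← lintegral_indicator ((hX s) hA) _]
  -- abbreviations
  set e : E → ℝ := fun z => Real.exp (∫ u in s..t, F u z) with he
  have hem : Measurable e := Real.measurable_exp.comp (hI s t)
  set W : ℝ → Ω → ℝ := fun r ω => Real.exp (∫ u in (0:ℝ)..r, F u (X 0 ω)) with hWdef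
  -- truncations
  set g : ℕ → E → ℝ := fun n => A.indicator (fun z => min (e z) n) with hg
  have hgm : ∀ n, Measurable (g n) := fun n =>
    (hem.min measurable_const).indicator hA
  have hg0 : ∀ n x, 0 ≤ g n x := by
    intro n x
    refine Set.indicator_nonneg (fun x _ => ?_) x
    exact le_min (Real.exp_nonneg _) (Nat.cast_nonneg n)
  have hgb : ∀ n, ∃ C, ∀ x, |g n x| ≤ C := by
    intro n
    refine ⟨n, fun x => ?_⟩
    rw [abs_of_nonneg (hg0 n x)]
    by_cases hx : x ∈ A
    · simp [hg, Set.indicator_of_mem hx, min_le_right]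
    · simp [hg, Set.indicator_of_notMem hx]
  -- pointwise suprema
  have hsup1 : ∀ x : E, (⨆ n : ℕ, ENNReal.ofReal (g n x))
      = ENNReal.ofReal (A.indicator e x) := by
    intro x
    by_cases hx : x ∈ A
    · simp only [hg, Set.indicator_of_mem hx]
      refine le_antisymm (iSup_le fun n => ENNReal.ofReal_le_ofReal (min_le_left _ _)) ?_
      refine le_iSup_of_le ⌈e x⌉₊ ?_
      rw [min_eq_left (Nat.le_ceil _)]
    · simp [hg, Set.indicator_of_notMem hx]
  have hsup2 : ∀ ω : Ω, (⨆ n : ℕ, ENNReal.ofReal (g n (X 0 ω) * W s ω))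
      = ENNReal.ofReal (A.indicator e (X 0 ω) * W s ω) := by
    intro ω
    by_cases hx : X 0 ω ∈ A
    · simp only [hg, Set.indicator_of_mem hx]
      refine le_antisymm (iSup_le fun n => ENNReal.ofReal_le_ofReal
        (mul_le_mul_of_nonneg_right (min_le_left _ _) (Real.exp_nonneg _))) ?_
      refine le_iSup_of_le ⌈e (X 0 ω)⌉₊ ?_
      rw [min_eq_left (Nat.le_ceil _)]
    · simp [hg, Set.indicator_of_notMem hx]
  -- combine
  calc P (X t ⁻¹' A)
      = ∫⁻ ω, ENNReal.ofReal (A.indicator (fun _ => (1:ℝ)) (X t ω)) ∂P := by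
        rw [← lintegral_indicator_one ((hX t) hA)]
        congr 1; funext ω
        by_cases hx : X t ω ∈ A <;>
          simp [Set.indicator_of_mem, Set.indicator_of_notMem, hx, Set.mem_preimage]
    _ = ∫⁻ ω, ENNReal.ofReal (A.indicator (fun _ => (1:ℝ)) (X 0 ω) * W t ω) ∂P := by
        exact key _ ((measurable_const (a := (1:ℝ))).indicator hA)
          (fun x => Set.indicator_nonneg (fun _ _ => zero_le_one) x)
          ⟨1, fun x => by
            by_cases hx : x ∈ A <;>
              simp [Set.indicator_of_mem, Set.indicator_of_notMem, hx]⟩ t ht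
    _ = ∫⁻ ω, ENNReal.ofReal (A.indicator e (X 0 ω) * W s ω) ∂P := by
        congr 1; funext ω
        by_cases hx : X 0 ω ∈ A
        · simp only [Set.indicator_of_mem hx, one_mul, hWdef, he]
          rw [← Real.exp_add]
          rw [← hadd (X 0 ω)]
          ring_nf
        · simp [Set.indicator_of_notMem hx]
    _ = ⨆ n : ℕ, ∫⁻ ω, ENNReal.ofReal (g n (X 0 ω) * W s ω) ∂P := by
        rw [← lintegral_iSup]
        · congr 1; funext ω; exact (hsup2 ω).symm
        · intro n
          exact ENNReal.measurable_ofReal.comp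
            (((hgm n).comp (hX 0)).mul
              (Real.measurable_exp.comp ((hI 0 s).comp (hX 0))))
        · intro m n hmn ω
          refine ENNReal.ofReal_le_ofReal (mul_le_mul_of_nonneg_right ?_ (Real.exp_nonneg _))
          by_cases hx : X 0 ω ∈ A
          · simp only [hg, Set.indicator_of_mem hx]
            exact min_le_min le_rfl (Nat.cast_le.mpr hmn)
          · simp [hg, Set.indicator_of_notMem hx]
    _ = ⨆ n : ℕ, ∫⁻ ω, ENNReal.ofReal (g n (X s ω)) ∂P := by
        refine iSup_congr fun n => ?_
        exact (key (g n) (hgm n) (hg0 n) (hgb n) s hs).symm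
    _ = ∫⁻ ω, ENNReal.ofReal (A.indicator e (X s ω)) ∂P := by
        rw [← lintegral_iSup]
        · congr 1; funext ω; exact hsup1 (X s ω)
        · intro n
          exact ENNReal.measurable_ofReal.comp ((hgm n).comp (hX s))
        · intro m n hmn ω
          refine ENNReal.ofReal_le_ofReal ?_
          by_cases hx : X s ω ∈ A
          · simp only [hg, Set.indicator_of_mem hx]
            exact min_le_min le_rfl (Nat.cast_le.mpr hmn)
          · simp [hg, Set.indicator_of_notMem hx]
    _ = ∫⁻ ω, (X s ⁻¹' A).indicator
          (fun ω => ENNReal.ofReal (e (X s ω))) ω ∂P := by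
        congr 1; funext ω
        by_cases hx : X s ω ∈ A <;>
          simp [Set.indicator_of_mem, Set.indicator_of_notMem, hx, Set.mem_preimage]
end

section
/- Let B be a standard real Brownian motion and a > 0, and set X_t = B_{t+a} (the Gauss–Gauss process). Then X has the FOED property with function F_a satisfying exp(∫₀ᵗ F_a(u,z) du) = √(a/(a+t)) · exp(z² t / (2a(a+t))) for all t ≥ 0 and z ∈ ℝ. -/
open MeasureTheory ProbabilityTheory
open scoped NNReal ENNReal

private lemma gauss_int (μ : ℝ) (v : ℝ≥0) (hv : v ≠ 0) (g : ℝ → ℝ) :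
    ∫ x, g x ∂(gaussianReal μ v) = ∫ x, gaussianPDFReal μ v x * g x := by
  rw [gaussianReal_of_var_ne_zero _ hv]
  have hpdf : gaussianPDF μ v = fun x => ((Real.toNNReal (gaussianPDFReal μ v x) : ℝ≥0) : ℝ≥0∞) := by
    funext x; rfl
  rw [hpdf, integral_withDensity_eq_integral_smul
    ((measurable_gaussianPDFReal μ v).real_toNNReal) g]
  congr 1; funext x
  simp [NNReal.smul_def, Real.coe_toNNReal _ (gaussianPDFReal_nonneg μ v x)]

private lemma density_eq (a t : ℝ) (ha : 0 < a) (ht : 0 ≤ t) (x : ℝ) :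
    gaussianPDFReal 0 (t + a).toNNReal x
      = gaussianPDFReal 0 a.toNNReal x
        * (Real.sqrt (a / (a + t)) * Real.exp (x ^ 2 * t / (2 * a * (a + t)))) := by
  have hat : 0 < a + t := by linarith
  have hta : 0 < t + a := by linarith
  have hπ : 0 < Real.pi := Real.pi_pos
  simp only [gaussianPDFReal, Real.coe_toNNReal _ hta.le, Real.coe_toNNReal _ ha.le, sub_zero]
  have hs : Real.sqrt (a / (a + t)) = Real.sqrt (2 * Real.pi * a) / Real.sqrt (2 * Real.pi * (t + a)) := by
    rw [← Real.sqrt_div (by positivity)]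
    congr 1
    field_simp
    ring
  have key : Real.exp (-x ^ 2 / (2 * a)) * Real.exp (x ^ 2 * t / (2 * a * (a + t)))
      = Real.exp (-x ^ 2 / (2 * (t + a))) := by
    rw [← Real.exp_add]
    congr 1
    field_simp
    ring
  have hB : Real.sqrt (2 * Real.pi * a) ≠ 0 := by positivity
  rw [hs, ← key]
  field_simp

private lemma gauss_change (a t : ℝ) (ha : 0 < a) (ht : 0 ≤ t) (g : ℝ → ℝ) :
    ∫ x, g x ∂(gaussianReal 0 (t + a).toNNReal)
      = ∫ x, g x * (Real.sqrt (a / (a + t)) * Real.exp (x ^ 2 * t / (2 * a * (a + t))))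
          ∂(gaussianReal 0 a.toNNReal) := by
  have h1 : (t + a).toNNReal ≠ 0 := by
    simp [Real.toNNReal_eq_zero, not_le]; linarith
  have h2 : a.toNNReal ≠ 0 := by
    simp [Real.toNNReal_eq_zero, not_le]; linarith
  rw [gauss_int _ _ h1, gauss_int _ _ h2]
  congr 1; funext x
  rw [density_eq a t ha ht x]
  ring

/-- The Gauss–Gauss process `X_t = B_{t+a}` (so `X_t ~ N(0, t + a)`) has the FOED property with
`exp(∫₀ᵗ F_a(u,z) du) = √(a/(a+t)) exp(z² t / (2a(a+t)))`. -/
theorem stmt_5 {Ω : Type*} [MeasurableSpace Ω] (P : Measure Ω) [IsProbabilityMeasure P]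
    (a : ℝ) (ha : 0 < a)
    (X : ℝ → Ω → ℝ) (hX : ∀ t, Measurable (X t))
    (hlaw : ∀ t ≥ (0:ℝ), P.map (X t) = ProbabilityTheory.gaussianReal 0 (t + a).toNNReal) :
    ∃ F : ℝ → ℝ → ℝ,
      (∀ f : ℝ → ℝ, Measurable f → (∃ C, ∀ x, |f x| ≤ C) → ∀ t ≥ (0:ℝ),
        ∫ ω, f (X t ω) ∂P
          = ∫ ω, f (X 0 ω) * Real.exp (∫ u in (0:ℝ)..t, F u (X 0 ω)) ∂P) ∧
      (∀ t ≥ (0:ℝ), ∀ z : ℝ,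
        Real.exp (∫ u in (0:ℝ)..t, F u z)
          = Real.sqrt (a / (a + t)) * Real.exp (z ^ 2 * t / (2 * a * (a + t)))) := by
  set F : ℝ → ℝ → ℝ := fun u z => -(1 / (2 * (a + u))) + z ^ 2 / (2 * (a + u) ^ 2) with hF
  have part2 : ∀ t ≥ (0:ℝ), ∀ z : ℝ,
      Real.exp (∫ u in (0:ℝ)..t, F u z)
        = Real.sqrt (a / (a + t)) * Real.exp (z ^ 2 * t / (2 * a * (a + t))) := by
    intro t ht z
    have hat : 0 < a + t := by linarith
    set g : ℝ → ℝ := fun s => -(1/2) * Real.log (a + s) + z ^ 2 / (2 * a) * (s / (a + s))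
      with hg
    have hmem : ∀ s ∈ Set.uIcc (0:ℝ) t, 0 < a + s := by
      intro s hs
      rw [Set.uIcc_of_le ht] at hs
      have := hs.1
      linarith
    have hderiv : ∀ s ∈ Set.uIcc (0:ℝ) t, HasDerivAt g (F s z) s := by
      intro s hs
      have has : 0 < a + s := hmem s hs
      have h1 : HasDerivAt (fun s : ℝ => a + s) 1 s := (hasDerivAt_id s).const_add a
      have hlog : HasDerivAt (fun s : ℝ => Real.log (a + s)) (1 / (a + s)) s := h1.log has.ne'
      have hdiv : HasDerivAt (fun s : ℝ => s / (a + s))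
          ((1 * (a + s) - s * 1) / (a + s) ^ 2) s :=
        (hasDerivAt_id s).div h1 has.ne'
      have hsum := (hlog.const_mul (-(1/2):ℝ)).add (hdiv.const_mul (z ^ 2 / (2 * a)))
      convert hsum using 1
      · rfl
      · rfl
      · rfl
      simp only [hF]
      field_simp
      ring
    have hcont : ContinuousOn (fun u => F u z) (Set.uIcc 0 t) := by
      simp only [hF]
      refine ContinuousOn.add (ContinuousOn.neg ?_) ?_
      · exact continuousOn_const.div (by fun_prop)
          (fun s hs => by have := hmem s hs; positivity)
      · exact continuousOn_const.div (by fun_prop)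
          (fun s hs => by have := hmem s hs; positivity)
    have hint : ∫ u in (0:ℝ)..t, F u z = g t - g 0 :=
      intervalIntegral.integral_eq_sub_of_hasDerivAt hderiv hcont.intervalIntegrable
    rw [hint]
    have hg0 : g 0 = -(1/2) * Real.log a := by simp [hg]
    have hgt : g t - g 0 = 1/2 * (Real.log a - Real.log (a + t))
        + z ^ 2 * t / (2 * a * (a + t)) := by
      rw [hg0]
      simp only [hg]
      field_simp
      ring
    rw [hgt, Real.exp_add]
    congr 1
    rw [Real.sqrt_eq_rpow, Real.rpow_def_of_pos (show (0:ℝ) < a / (a + t) by positivity),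
      Real.log_div ha.ne' hat.ne']
    congr 1
    ring
  refine ⟨F, ?_, part2⟩
  intro f hfm _ t ht
  have hat : 0 < a + t := by linarith
  have hL : ∫ ω, f (X t ω) ∂P = ∫ x, f x ∂(gaussianReal 0 (t + a).toNNReal) := by
    rw [← hlaw t ht, integral_map (hX t).aemeasurable hfm.aestronglyMeasurable]
  have hmulm : Measurable fun x : ℝ =>
      f x * (Real.sqrt (a / (a + t)) * Real.exp (x ^ 2 * t / (2 * a * (a + t)))) :=
    hfm.mul (by fun_prop)
  have hR : ∫ ω, f (X 0 ω) * Real.exp (∫ u in (0:ℝ)..t, F u (X 0 ω)) ∂P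
      = ∫ x, f x * (Real.sqrt (a / (a + t)) * Real.exp (x ^ 2 * t / (2 * a * (a + t))))
          ∂(gaussianReal 0 a.toNNReal) := by
    have hpt : ∀ ω, f (X 0 ω) * Real.exp (∫ u in (0:ℝ)..t, F u (X 0 ω))
        = f (X 0 ω) * (Real.sqrt (a / (a + t))
            * Real.exp ((X 0 ω) ^ 2 * t / (2 * a * (a + t)))) := fun ω => by
      rw [part2 t ht (X 0 ω)]
    simp_rw [hpt]
    rw [← integral_map (hX 0).aemeasurable hmulm.aestronglyMeasurable, hlaw 0 le_rfl, zero_add]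
  rw [hL, hR, gauss_change a t ha ht f]
end

section
/- Let μ be a finite signed Borel measure on ℝ such that ∫ e^{λx} d|μ|(x) < ∞ and ∫ e^{λx} dμ(x) = 0 for every λ ∈ ℝ. Then μ = 0. -/
open MeasureTheory Real Filter Metric

-- L0
lemma aux_abs_pow_le (n : ℕ) (x : ℝ) : |x| ^ n ≤ (n.factorial : ℝ) * (Real.exp x + Real.exp (-x)) := by
  have h1 : |x| ^ n / n.factorial ≤ Real.exp |x| := by
    calc |x| ^ n / n.factorial ≤ ∑ i ∈ Finset.range (n+1), |x| ^ i / (i.factorial:ℝ)  := by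
          exact Finset.single_le_sum (f := fun i => |x| ^ i / (i.factorial:ℝ))
            (fun i _ => by positivity) (Finset.self_mem_range_succ n)
      _ ≤ Real.exp |x| := Real.sum_le_exp_of_nonneg (abs_nonneg x) _
  have h2 : Real.exp |x| ≤ Real.exp x + Real.exp (-x) := by
    rcases abs_cases x with ⟨h, _⟩ | ⟨h, _⟩
    · rw [h]; nlinarith [Real.exp_pos (-x)]
    · rw [h]; nlinarith [Real.exp_pos x]
  have hn : (0:ℝ) < n.factorial := by exact_mod_cast Nat.factorial_pos n
  calc |x| ^ n = (n.factorial:ℝ) * (|x| ^ n / n.factorial) := by field_simp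
    _ ≤ (n.factorial:ℝ) * Real.exp |x| := by gcongr
    _ ≤ (n.factorial : ℝ) * (Real.exp x + Real.exp (-x)) := by gcongr

-- L1
lemma aux_int_pow_exp {A : Measure ℝ} (hA : ∀ l : ℝ, Integrable (fun x => Real.exp (l * x)) A)
    (n : ℕ) (l : ℝ) : Integrable (fun x => x ^ n * Real.exp (l * x)) A := by
  have hbound : Integrable (fun x => (n.factorial : ℝ) * (Real.exp ((l+1) * x) + Real.exp ((l-1) * x))) A :=
    ((hA (l+1)).add (hA (l-1))).const_mul _
  refine hbound.mono' ?_ ?_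
  · exact ((continuous_pow n).mul ((Real.continuous_exp).comp
      (continuous_const.mul continuous_id))).aestronglyMeasurable
  · refine Filter.Eventually.of_forall fun x => ?_
    have h1 : ‖x ^ n * Real.exp (l * x)‖ = |x| ^ n * Real.exp (l * x) := by
      rw [norm_mul, norm_pow, Real.norm_eq_abs, Real.norm_eq_abs,
        abs_of_pos (Real.exp_pos _)]
    rw [h1]
    have h2 : |x| ^ n * Real.exp (l * x) ≤ ((n.factorial : ℝ) * (Real.exp x + Real.exp (-x))) * Real.exp (l * x) :=
      mul_le_mul_of_nonneg_right (aux_abs_pow_le n x) (Real.exp_pos _).le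
    refine h2.trans (le_of_eq ?_)
    rw [add_mul, mul_assoc, add_mul, ← Real.exp_add, ← Real.exp_add]
    ring_nf

lemma aux_exp_abs_le (y : ℝ) : Real.exp |y| ≤ Real.exp y + Real.exp (-y) := by
  rcases abs_cases y with ⟨h, _⟩ | ⟨h, _⟩
  · rw [h]; nlinarith [Real.exp_pos (-y)]
  · rw [h]; nlinarith [Real.exp_pos y]

lemma aux_sq_exp (l x : ℝ) :
    (Real.exp x + Real.exp (-x)) * ((Real.exp x + Real.exp (-x)) * Real.exp (l * x))
      = Real.exp ((l + 2) * x) + 2 * Real.exp (l * x) + Real.exp ((l - 2) * x) := by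
  have a1 : Real.exp ((l + 2) * x) = Real.exp x * (Real.exp x * Real.exp (l * x)) := by
    rw [← Real.exp_add, ← Real.exp_add]; ring_nf
  have a2 : Real.exp ((l - 2) * x) = Real.exp (-x) * (Real.exp (-x) * Real.exp (l * x)) := by
    rw [← Real.exp_add, ← Real.exp_add]; ring_nf
  have a3 : Real.exp x * Real.exp (-x) = 1 := by rw [← Real.exp_add]; simp
  rw [a1, a2]
  linear_combination (2 * Real.exp (l * x)) * a3

lemma aux_exp_ball_le {l l₀ : ℝ} (hl : |l - l₀| ≤ 1) (x : ℝ) :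
    Real.exp (l * x) ≤ (Real.exp x + Real.exp (-x)) * Real.exp (l₀ * x) := by
  have h1 : Real.exp (l * x) = Real.exp ((l - l₀) * x) * Real.exp (l₀ * x) := by
    rw [← Real.exp_add]; ring_nf
  rw [h1]
  have h2 : Real.exp ((l - l₀) * x) ≤ Real.exp x + Real.exp (-x) := by
    refine le_trans ?_ (aux_exp_abs_le x)
    refine Real.exp_le_exp.mpr ?_
    calc (l - l₀) * x ≤ |(l - l₀) * x| := le_abs_self _
      _ = |l - l₀| * |x| := abs_mul _ _
      _ ≤ 1 * |x| := by gcongr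
      _ = |x| := one_mul _
  exact mul_le_mul_of_nonneg_right h2 (Real.exp_pos _).le

lemma aux_hasDeriv {μ : Measure ℝ} (hμ : ∀ l : ℝ, Integrable (fun x => Real.exp (l * x)) μ)
    (n : ℕ) (l₀ : ℝ) :
    HasDerivAt (fun l => ∫ x, x ^ n * Real.exp (l * x) ∂μ)
      (∫ x, x ^ (n + 1) * Real.exp (l₀ * x) ∂μ) l₀ := by
  have cont : ∀ (m : ℕ) (l : ℝ), Continuous (fun x : ℝ => x ^ m * Real.exp (l * x)) :=
    fun m l => (continuous_pow m).mul (Real.continuous_exp.comp (continuous_const.mul continuous_id))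
  have key := hasDerivAt_integral_of_dominated_loc_of_deriv_le (μ := μ) (x₀ := l₀) (s := ball l₀ 1)
    (F := fun l x => x ^ n * Real.exp (l * x)) (F' := fun l x => x ^ (n + 1) * Real.exp (l * x))
    (bound := fun x => ((n+1).factorial : ℝ) *
      (Real.exp ((l₀ + 2) * x) + 2 * Real.exp (l₀ * x) + Real.exp ((l₀ - 2) * x)))
    (ball_mem_nhds l₀ one_pos)
    (Eventually.of_forall fun l => (cont n l).aestronglyMeasurable)
    (aux_int_pow_exp hμ n l₀)
    ((cont (n+1) l₀).aestronglyMeasurable)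
    ?_ ?_ ?_
  · exact key.2
  · refine Eventually.of_forall fun x => fun l hl => ?_
    have hl' : |l - l₀| ≤ 1 := by
      rw [mem_ball, Real.dist_eq] at hl; exact hl.le
    have h1 : ‖x ^ (n+1) * Real.exp (l * x)‖ = |x| ^ (n+1) * Real.exp (l * x) := by
      rw [norm_mul, norm_pow, Real.norm_eq_abs, Real.norm_eq_abs, abs_of_pos (Real.exp_pos _)]
    rw [h1]
    calc |x| ^ (n+1) * Real.exp (l * x)
        ≤ (((n+1).factorial : ℝ) * (Real.exp x + Real.exp (-x))) * Real.exp (l * x) :=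
          mul_le_mul_of_nonneg_right (aux_abs_pow_le _ x) (Real.exp_pos _).le
      _ ≤ (((n+1).factorial : ℝ) * (Real.exp x + Real.exp (-x))) *
            ((Real.exp x + Real.exp (-x)) * Real.exp (l₀ * x)) := by
          refine mul_le_mul_of_nonneg_left (aux_exp_ball_le hl' x) (by positivity)
      _ = ((n+1).factorial : ℝ) *
            (Real.exp ((l₀ + 2) * x) + 2 * Real.exp (l₀ * x) + Real.exp ((l₀ - 2) * x)) := by
          rw [mul_assoc, aux_sq_exp]
  · exact (((hμ (l₀ + 2)).add ((hμ l₀).const_mul 2)).add (hμ (l₀ - 2))).const_mul _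
  · refine Eventually.of_forall fun x => fun l _ => ?_
    have h : HasDerivAt (fun l : ℝ => Real.exp (l * x)) (Real.exp (l * x) * x) l :=
      (hasDerivAt_mul_const x).exp
    have h2 := h.const_mul (x ^ n)
    convert h2 using 1
    · rfl
    simp only [pow_succ]; ring

lemma aux_moments {A B : Measure ℝ}
    (hA : ∀ l : ℝ, Integrable (fun x => Real.exp (l * x)) A)
    (hB : ∀ l : ℝ, Integrable (fun x => Real.exp (l * x)) B)
    (hlap : ∀ l : ℝ, ∫ x, Real.exp (l * x) ∂A = ∫ x, Real.exp (l * x) ∂B) :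
    ∀ (n : ℕ) (l : ℝ), ∫ x, x ^ n * Real.exp (l * x) ∂A = ∫ x, x ^ n * Real.exp (l * x) ∂B := by
  intro n
  induction n with
  | zero => intro l; simpa using hlap l
  | succ n ih =>
    intro l
    have hDA := aux_hasDeriv hA n l
    have hDB := aux_hasDeriv hB n l
    have hD := hDA.sub hDB
    have hzero : (fun l => ∫ x, x ^ n * Real.exp (l * x) ∂A - ∫ x, x ^ n * Real.exp (l * x) ∂B)
        = fun _ : ℝ => (0 : ℝ) := funext fun l => sub_eq_zero.mpr (ih l)
    rw [show ((fun l => ∫ x, x ^ n * Real.exp (l * x) ∂A) - fun l => ∫ x, x ^ n * Real.exp (l * x) ∂B) = fun _ : ℝ => (0 : ℝ) from hzero] at hD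
    have := hD.unique (hasDerivAt_const l 0)
    linarith [this]

lemma aux_int_pow {A : Measure ℝ} (hA : ∀ l : ℝ, Integrable (fun x => Real.exp (l * x)) A)
    (n : ℕ) : Integrable (fun x => x ^ n) A := by
  simpa using aux_int_pow_exp hA n 0

-- partial sums of cos series bounded
lemma aux_cos_partial_bound (y : ℝ) (K : ℕ) :
    |∑ k ∈ Finset.range K, (-1 : ℝ) ^ k * y ^ (2 * k) / ((2 * k).factorial : ℝ)|
      ≤ Real.exp y + Real.exp (-y) := by
  calc |∑ k ∈ Finset.range K, (-1 : ℝ) ^ k * y ^ (2 * k) / ((2 * k).factorial : ℝ)|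
      ≤ ∑ k ∈ Finset.range K, |(-1 : ℝ) ^ k * y ^ (2 * k) / ((2 * k).factorial : ℝ)| :=
        Finset.abs_sum_le_sum_abs _ _
    _ = ∑ k ∈ Finset.range K, |y| ^ (2 * k) / ((2 * k).factorial : ℝ) := by
        refine Finset.sum_congr rfl fun k _ => ?_
        rw [abs_div, abs_mul, abs_pow, abs_neg, abs_one, one_pow, one_mul, abs_pow,
          Nat.abs_cast]
    _ = ∑ m ∈ (Finset.range K).image (fun k => 2 * k), |y| ^ m / (m.factorial : ℝ) := by
        rw [Finset.sum_image (by intro a _ b _ h; simp only at h; omega)]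
    _ ≤ ∑ m ∈ Finset.range (2 * K), |y| ^ m / (m.factorial : ℝ) := by
        refine Finset.sum_le_sum_of_subset_of_nonneg ?_ (fun m _ _ => by positivity)
        intro m hm
        simp only [Finset.mem_image, Finset.mem_range] at hm ⊢
        obtain ⟨k, hk, rfl⟩ := hm; omega
    _ ≤ Real.exp |y| := Real.sum_le_exp_of_nonneg (abs_nonneg y) _
    _ ≤ Real.exp y + Real.exp (-y) := aux_exp_abs_le y

lemma aux_sin_partial_bound (y : ℝ) (K : ℕ) :
    |∑ k ∈ Finset.range K, (-1 : ℝ) ^ k * y ^ (2 * k + 1) / ((2 * k + 1).factorial : ℝ)|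
      ≤ Real.exp y + Real.exp (-y) := by
  calc |∑ k ∈ Finset.range K, (-1 : ℝ) ^ k * y ^ (2 * k + 1) / ((2 * k + 1).factorial : ℝ)|
      ≤ ∑ k ∈ Finset.range K, |(-1 : ℝ) ^ k * y ^ (2 * k + 1) / ((2 * k + 1).factorial : ℝ)| :=
        Finset.abs_sum_le_sum_abs _ _
    _ = ∑ k ∈ Finset.range K, |y| ^ (2 * k + 1) / ((2 * k + 1).factorial : ℝ) := by
        refine Finset.sum_congr rfl fun k _ => ?_
        rw [abs_div, abs_mul, abs_pow, abs_neg, abs_one, one_pow, one_mul, abs_pow,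
          Nat.abs_cast]
    _ = ∑ m ∈ (Finset.range K).image (fun k => 2 * k + 1), |y| ^ m / (m.factorial : ℝ) := by
        rw [Finset.sum_image (by intro a _ b _ h; simp only at h; omega)]
    _ ≤ ∑ m ∈ Finset.range (2 * K + 1), |y| ^ m / (m.factorial : ℝ) := by
        refine Finset.sum_le_sum_of_subset_of_nonneg ?_ (fun m _ _ => by positivity)
        intro m hm
        simp only [Finset.mem_image, Finset.mem_range] at hm ⊢
        obtain ⟨k, hk, rfl⟩ := hm; omega
    _ ≤ Real.exp |y| := Real.sum_le_exp_of_nonneg (abs_nonneg y) _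
    _ ≤ Real.exp y + Real.exp (-y) := aux_exp_abs_le y

lemma aux_bound_integrable {A : Measure ℝ}
    (hA : ∀ l : ℝ, Integrable (fun x => Real.exp (l * x)) A) (t : ℝ) :
    Integrable (fun x => Real.exp (t * x) + Real.exp (-(t * x))) A := by
  have h2 : Integrable (fun x => Real.exp (-t * x)) A := hA (-t)
  have h3 : Integrable (fun x => Real.exp (t * x) + Real.exp (-t * x)) A := (hA t).add h2
  simpa [neg_mul] using h3

-- DCT step for cos
lemma aux_cos_eq {A B : Measure ℝ}
    (hA : ∀ l : ℝ, Integrable (fun x => Real.exp (l * x)) A)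
    (hB : ∀ l : ℝ, Integrable (fun x => Real.exp (l * x)) B)
    (hlap : ∀ l : ℝ, ∫ x, Real.exp (l * x) ∂A = ∫ x, Real.exp (l * x) ∂B) (t : ℝ) :
    (∫ x, Real.cos (t * x) ∂A = ∫ x, Real.cos (t * x) ∂B)
      ∧ (∫ x, Real.sin (t * x) ∂A = ∫ x, Real.sin (t * x) ∂B) := by
  have hmom := aux_moments hA hB hlap
  -- integrability of partial sums' terms
  have hterm : ∀ (μ : Measure ℝ) (_ : ∀ l : ℝ, Integrable (fun x => Real.exp (l * x)) μ)
      (c : ℝ) (m : ℕ), Integrable (fun x => c * (t * x) ^ m) μ := by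
    intro μ hμ c m
    have : (fun x => c * (t * x) ^ m) = fun x => (c * t ^ m) * x ^ m := by
      funext x; rw [mul_pow]; ring
    rw [this]
    exact (aux_int_pow hμ m).const_mul _
  -- equality of integrals of terms
  have htermEq : ∀ (c : ℝ) (m : ℕ),
      ∫ x, c * (t * x) ^ m ∂A = ∫ x, c * (t * x) ^ m ∂B := by
    intro c m
    have h1 : ∀ (μ : Measure ℝ), ∫ x, c * (t * x) ^ m ∂μ = (c * t ^ m) * ∫ x, x ^ m ∂μ := by
      intro μ
      rw [← integral_const_mul]
      congr 1; funext x; rw [mul_pow]; ring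
    rw [h1, h1]
    have := hmom m 0
    simp only [zero_mul, Real.exp_zero, mul_one] at this
    rw [this]
  constructor
  · -- cos
    have key : ∀ (μ : Measure ℝ) (_ : ∀ l : ℝ, Integrable (fun x => Real.exp (l * x)) μ),
        Tendsto (fun K => ∫ x, (∑ k ∈ Finset.range K,
            (-1 : ℝ) ^ k * (t * x) ^ (2 * k) / ((2 * k).factorial : ℝ)) ∂μ) atTop
          (nhds (∫ x, Real.cos (t * x) ∂μ)) := by
      intro μ hμ
      refine tendsto_integral_of_dominated_convergence
        (fun x => Real.exp (t * x) + Real.exp (-(t * x))) ?_ (aux_bound_integrable hμ t) ?_ ?_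
      · intro K
        refine (Continuous.aestronglyMeasurable ?_)
        exact continuous_finset_sum _ fun k _ => by fun_prop
      · intro K
        refine Eventually.of_forall fun x => ?_
        rw [Real.norm_eq_abs]
        exact aux_cos_partial_bound (t * x) K
      · refine Eventually.of_forall fun x => ?_
        exact (Real.hasSum_cos (t * x)).tendsto_sum_nat
    have hseq : (fun K => ∫ x, (∑ k ∈ Finset.range K,
            (-1 : ℝ) ^ k * (t * x) ^ (2 * k) / ((2 * k).factorial : ℝ)) ∂A)
        = fun K => ∫ x, (∑ k ∈ Finset.range K,
            (-1 : ℝ) ^ k * (t * x) ^ (2 * k) / ((2 * k).factorial : ℝ)) ∂B := by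
      funext K
      rw [integral_finset_sum _ (fun k _ => by
          simpa [mul_div_assoc, div_eq_mul_inv, mul_comm, mul_assoc, mul_left_comm] using
            hterm A hA ((-1 : ℝ) ^ k / ((2 * k).factorial : ℝ)) (2 * k)),
        integral_finset_sum _ (fun k _ => by
          simpa [mul_div_assoc, div_eq_mul_inv, mul_comm, mul_assoc, mul_left_comm] using
            hterm B hB ((-1 : ℝ) ^ k / ((2 * k).factorial : ℝ)) (2 * k))]
      refine Finset.sum_congr rfl fun k _ => ?_
      have := htermEq ((-1 : ℝ) ^ k / ((2 * k).factorial : ℝ)) (2 * k)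
      have e : ∀ x : ℝ, (-1 : ℝ) ^ k * (t * x) ^ (2 * k) / ((2 * k).factorial : ℝ)
          = ((-1 : ℝ) ^ k / ((2 * k).factorial : ℝ)) * (t * x) ^ (2 * k) := fun x => by ring
      simp only [e]
      exact this
    exact tendsto_nhds_unique (hseq ▸ key A hA) (key B hB)
  · -- sin
    have key : ∀ (μ : Measure ℝ) (_ : ∀ l : ℝ, Integrable (fun x => Real.exp (l * x)) μ),
        Tendsto (fun K => ∫ x, (∑ k ∈ Finset.range K,
            (-1 : ℝ) ^ k * (t * x) ^ (2 * k + 1) / ((2 * k + 1).factorial : ℝ)) ∂μ) atTop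
          (nhds (∫ x, Real.sin (t * x) ∂μ)) := by
      intro μ hμ
      refine tendsto_integral_of_dominated_convergence
        (fun x => Real.exp (t * x) + Real.exp (-(t * x))) ?_ (aux_bound_integrable hμ t) ?_ ?_
      · intro K
        refine (Continuous.aestronglyMeasurable ?_)
        exact continuous_finset_sum _ fun k _ => by fun_prop
      · intro K
        refine Eventually.of_forall fun x => ?_
        rw [Real.norm_eq_abs]
        exact aux_sin_partial_bound (t * x) K
      · refine Eventually.of_forall fun x => ?_
        exact (Real.hasSum_sin (t * x)).tendsto_sum_nat
    have hseq : (fun K => ∫ x, (∑ k ∈ Finset.range K,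
            (-1 : ℝ) ^ k * (t * x) ^ (2 * k + 1) / ((2 * k + 1).factorial : ℝ)) ∂A)
        = fun K => ∫ x, (∑ k ∈ Finset.range K,
            (-1 : ℝ) ^ k * (t * x) ^ (2 * k + 1) / ((2 * k + 1).factorial : ℝ)) ∂B := by
      funext K
      rw [integral_finset_sum _ (fun k _ => by
          simpa [mul_div_assoc, div_eq_mul_inv, mul_comm, mul_assoc, mul_left_comm] using
            hterm A hA ((-1 : ℝ) ^ k / ((2 * k + 1).factorial : ℝ)) (2 * k + 1)),
        integral_finset_sum _ (fun k _ => by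
          simpa [mul_div_assoc, div_eq_mul_inv, mul_comm, mul_assoc, mul_left_comm] using
            hterm B hB ((-1 : ℝ) ^ k / ((2 * k + 1).factorial : ℝ)) (2 * k + 1))]
      refine Finset.sum_congr rfl fun k _ => ?_
      have := htermEq ((-1 : ℝ) ^ k / ((2 * k + 1).factorial : ℝ)) (2 * k + 1)
      have e : ∀ x : ℝ, (-1 : ℝ) ^ k * (t * x) ^ (2 * k + 1) / ((2 * k + 1).factorial : ℝ)
          = ((-1 : ℝ) ^ k / ((2 * k + 1).factorial : ℝ)) * (t * x) ^ (2 * k + 1) := fun x => by ring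
      simp only [e]
      exact this
    exact tendsto_nhds_unique (hseq ▸ key A hA) (key B hB)

section
variable {T : ℝ} [hT : Fact (0 < T)]

lemma aux_int_circle (g : C(AddCircle T, ℂ)) (μ : Measure ℝ) [IsFiniteMeasure μ] :
    Integrable (fun x : ℝ => g (x : AddCircle T)) μ := by
  refine (integrable_const ‖g‖).mono'
    ((g.continuous.comp (AddCircle.continuous_mk' T)).aestronglyMeasurable)
    (Eventually.of_forall fun x => g.norm_coe_le_norm _)

/-- integration against μ as a continuous linear functional on C(AddCircle T, ℂ) -/
noncomputable def auxCLM (μ : Measure ℝ) [IsFiniteMeasure μ] :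
    C(AddCircle T, ℂ) →L[ℂ] ℂ :=
  LinearMap.mkContinuous
    { toFun := fun g => ∫ x, g (x : AddCircle T) ∂μ
      map_add' := fun g h => by
        simp only [ContinuousMap.add_apply]
        exact integral_add (aux_int_circle g μ) (aux_int_circle h μ)
      map_smul' := fun c g => by
        simp only [ContinuousMap.smul_apply, RingHom.id_apply, smul_eq_mul]
        exact integral_const_mul c _ }
    ((μ Set.univ).toReal)
    (fun g => by
      simp only [LinearMap.coe_mk, AddHom.coe_mk]
      calc ‖∫ x, g (x : AddCircle T) ∂μ‖ ≤ ‖g‖ * (μ Set.univ).toReal :=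
            norm_integral_le_of_norm_le_const (Eventually.of_forall fun x => g.norm_coe_le_norm _)
        _ = (μ Set.univ).toReal * ‖g‖ := mul_comm _ _)

lemma auxCLM_apply (μ : Measure ℝ) [IsFiniteMeasure μ] (g : C(AddCircle T, ℂ)) :
    auxCLM μ g = ∫ x, g (x : AddCircle T) ∂μ := rfl

lemma aux_fourier_step {A B : Measure ℝ} [IsFiniteMeasure A] [IsFiniteMeasure B]
    (hcos : ∀ t : ℝ, ∫ x, Real.cos (t * x) ∂A = ∫ x, Real.cos (t * x) ∂B)
    (hsin : ∀ t : ℝ, ∫ x, Real.sin (t * x) ∂A = ∫ x, Real.sin (t * x) ∂B)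
    (g : C(AddCircle T, ℂ)) :
    ∫ x, g (x : AddCircle T) ∂A = ∫ x, g (x : AddCircle T) ∂B := by
  -- the submodule of functions with equal integrals
  let S : Submodule ℂ C(AddCircle T, ℂ) :=
    { carrier := {g | auxCLM A g = auxCLM B g}
      add_mem' := fun {a b} ha hb => by
        simp only [Set.mem_setOf_eq, map_add] at *
        rw [ha, hb]
      zero_mem' := by simp
      smul_mem' := fun c a ha => by
        simp only [Set.mem_setOf_eq, _root_.map_smul] at *
        rw [ha] }
  have hSclosed : IsClosed (S : Set C(AddCircle T, ℂ)) :=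
    isClosed_eq (auxCLM A).continuous (auxCLM B).continuous
  have hfourier : ∀ n : ℤ, fourier n ∈ S := by
    intro n
    have key : ∀ (μ : Measure ℝ) [IsFiniteMeasure μ],
        ∫ x, (fourier n) (x : AddCircle T) ∂μ
          = ((∫ x, Real.cos ((2 * π * n / T) * x) ∂μ : ℝ) : ℂ)
            + ((∫ x, Real.sin ((2 * π * n / T) * x) ∂μ : ℝ) : ℂ) * Complex.I := by
      intro μ _
      set t : ℝ := 2 * π * n / T with ht
      have harg : ∀ x : ℝ, (fourier n) (x : AddCircle T)
          = ((Real.cos (t * x) : ℂ)) + ((Real.sin (t * x) : ℂ)) * Complex.I := by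
        intro x
        rw [fourier_coe_apply]
        have h1 : 2 * (π : ℂ) * Complex.I * n * x / T = ((t * x : ℝ) : ℂ) * Complex.I := by
          have hTne : (T : ℂ) ≠ 0 := by exact_mod_cast hT.out.ne'
          push_cast [ht]
          field_simp
        rw [h1, Complex.exp_mul_I]
        push_cast
        rfl
      simp only [harg]
      have hIntCos : Integrable (fun x => Real.cos (t * x)) μ :=
        (integrable_const (1:ℝ)).mono'
          ((Real.continuous_cos.comp (continuous_const.mul continuous_id)).aestronglyMeasurable)
          (Eventually.of_forall fun x => by rw [Real.norm_eq_abs]; exact Real.abs_cos_le_one _)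
      have hIntSin : Integrable (fun x => Real.sin (t * x)) μ :=
        (integrable_const (1:ℝ)).mono'
          ((Real.continuous_sin.comp (continuous_const.mul continuous_id)).aestronglyMeasurable)
          (Eventually.of_forall fun x => by rw [Real.norm_eq_abs]; exact Real.abs_sin_le_one _)
      have hIntCosC : Integrable (fun x => ((Real.cos (t * x) : ℝ) : ℂ)) μ := hIntCos.ofReal
      have hIntSinC : Integrable (fun x => ((Real.sin (t * x) : ℝ) : ℂ)) μ := hIntSin.ofReal
      have e1 : ∫ x, ((Real.cos (t * x) : ℝ) : ℂ) ∂μ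
          = ((∫ x, Real.cos (t * x) ∂μ : ℝ) : ℂ) := integral_ofReal
      have e2 : ∫ x, ((Real.sin (t * x) : ℝ) : ℂ) ∂μ
          = ((∫ x, Real.sin (t * x) ∂μ : ℝ) : ℂ) := integral_ofReal
      calc ∫ x, (((Real.cos (t * x) : ℝ) : ℂ) + ((Real.sin (t * x) : ℝ) : ℂ) * Complex.I) ∂μ
          = (∫ x, ((Real.cos (t * x) : ℝ) : ℂ) ∂μ)
            + ∫ x, ((Real.sin (t * x) : ℝ) : ℂ) * Complex.I ∂μ :=
            integral_add hIntCosC (hIntSinC.mul_const Complex.I)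
        _ = (∫ x, ((Real.cos (t * x) : ℝ) : ℂ) ∂μ)
            + (∫ x, ((Real.sin (t * x) : ℝ) : ℂ) ∂μ) * Complex.I := by
            rw [integral_mul_const]
        _ = ((∫ x, Real.cos (t * x) ∂μ : ℝ) : ℂ)
            + ((∫ x, Real.sin (t * x) ∂μ : ℝ) : ℂ) * Complex.I := by rw [e1, e2]
    show auxCLM A (fourier n) = auxCLM B (fourier n)
    rw [auxCLM_apply, auxCLM_apply, key A, key B, hcos, hsin]
  have hspan : Submodule.span ℂ (Set.range (@fourier T)) ≤ S := by
    rw [Submodule.span_le]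
    rintro - ⟨n, rfl⟩
    exact hfourier n
  have htop : (⊤ : Submodule ℂ C(AddCircle T, ℂ)) ≤ S := by
    rw [← span_fourier_closure_eq_top]
    exact Submodule.topologicalClosure_minimal _ hspan hSclosed
  have hg : g ∈ S := htop (Submodule.mem_top)
  exact hg

end

lemma aux_one_period {A B : Measure ℝ} [IsFiniteMeasure A] [IsFiniteMeasure B]
    (hfour : ∀ (T : ℝ), 0 < T → ∀ g : C(AddCircle T, ℂ),
      ∫ x, g (x : AddCircle T) ∂A = ∫ x, g (x : AddCircle T) ∂B)
    (f : ℝ → ℝ) (hf : Continuous f) (hb : ∀ x, |f x| ≤ 1)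
    (T : ℝ) (hT : 0 < T) (hend : f (-T / 2) = f (-T / 2 + T)) :
    ∃ h : ℝ → ℝ, (∫ x, h x ∂A = ∫ x, h x ∂B) ∧ (∀ x, |h x| ≤ 1)
      ∧ Continuous h ∧ (∀ x : ℝ, |x| < T / 2 → h x = f x) := by
  haveI : Fact (0 < T) := ⟨hT⟩
  refine ⟨fun x => AddCircle.liftIco T (-T / 2) f (x : AddCircle T), ?_, ?_, ?_, ?_⟩
  · set G : C(AddCircle T, ℂ) :=
      ⟨fun z => ((AddCircle.liftIco T (-T / 2) f z : ℝ) : ℂ),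
        Complex.continuous_ofReal.comp (AddCircle.liftIco_continuous hend hf.continuousOn)⟩
      with hGdef
    have h1 := hfour T hT G
    have hGA : ∫ x, G (x : AddCircle T) ∂A
        = ((∫ x, AddCircle.liftIco T (-T / 2) f (x : AddCircle T) ∂A : ℝ) : ℂ) :=
      integral_ofReal
    have hGB : ∫ x, G (x : AddCircle T) ∂B
        = ((∫ x, AddCircle.liftIco T (-T / 2) f (x : AddCircle T) ∂B : ℝ) : ℂ) :=
      integral_ofReal
    rw [hGA, hGB] at h1
    exact_mod_cast h1
  · intro x; exact hb _
  · exact (AddCircle.liftIco_continuous hend hf.continuousOn).comp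
      (AddCircle.continuous_mk' T)
  · intro x hx
    refine AddCircle.liftIco_coe_apply ?_
    constructor
    · have := neg_abs_le x; linarith
    · have := le_abs_self x; linarith

lemma aux_cc_step {A B : Measure ℝ} [IsFiniteMeasure A] [IsFiniteMeasure B]
    (hfour : ∀ (T : ℝ), 0 < T → ∀ g : C(AddCircle T, ℂ),
      ∫ x, g (x : AddCircle T) ∂A = ∫ x, g (x : AddCircle T) ∂B)
    (f : ℝ → ℝ) (hf : Continuous f) (hb : ∀ x, |f x| ≤ 1) (R : ℝ) (hR : 0 < R)
    (hsupp : ∀ x : ℝ, R ≤ |x| → f x = 0) :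
    ∫ x, f x ∂A = ∫ x, f x ∂B := by
  set T : ℕ → ℝ := fun n => 2 * R + 2 + 2 * n with hTdef
  have hTpos : ∀ n, 0 < T n := fun n => by
    have : (0:ℝ) ≤ n := Nat.cast_nonneg n
    simp only [hTdef]; linarith
  have key : ∀ n, ∃ h : ℝ → ℝ, (∫ x, h x ∂A = ∫ x, h x ∂B) ∧ (∀ x, |h x| ≤ 1)
      ∧ Continuous h ∧ (∀ x : ℝ, |x| < T n / 2 → h x = f x) := by
    intro n
    refine aux_one_period hfour f hf hb (T n) (hTpos n) ?_
    have h0 : (0:ℝ) ≤ n := Nat.cast_nonneg n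
    rw [hsupp (-T n / 2) ?_, hsupp (-T n / 2 + T n) ?_]
    · rw [abs_of_nonneg (by simp only [hTdef]; linarith)]
      simp only [hTdef]; linarith
    · rw [abs_of_nonpos (by simp only [hTdef]; linarith)]
      simp only [hTdef]; linarith
  choose h hInt hBound hCont hAgree using key
  have hlim : ∀ (μ : Measure ℝ) [IsFiniteMeasure μ],
      Tendsto (fun n => ∫ x, h n x ∂μ) atTop (nhds (∫ x, f x ∂μ)) := by
    intro μ _
    refine tendsto_integral_of_dominated_convergence (fun _ => (1:ℝ)) ?_ (integrable_const 1) ?_ ?_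
    · intro n; exact (hCont n).aestronglyMeasurable
    · intro n
      exact Eventually.of_forall fun x => by rw [Real.norm_eq_abs]; exact hBound n x
    · refine Eventually.of_forall fun x => ?_
      refine Tendsto.congr' ?_ tendsto_const_nhds
      filter_upwards [eventually_ge_atTop ⌈|x|⌉₊] with n hn
      have hcast : (⌈|x|⌉₊ : ℝ) ≤ n := Nat.cast_le.mpr hn
      have h2x : |x| ≤ (n:ℝ) := le_trans (Nat.le_ceil _) hcast
      refine (hAgree n x ?_).symm
      simp only [hTdef]; linarith
  have hseq : (fun n => ∫ x, h n x ∂A) = fun n => ∫ x, h n x ∂B := funext hInt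
  exact tendsto_nhds_unique (hseq ▸ hlim A) (hlim B)

lemma aux_Iic {A B : Measure ℝ} [IsFiniteMeasure A] [IsFiniteMeasure B]
    (hcc : ∀ f : ℝ → ℝ, Continuous f → (∀ x, |f x| ≤ 1) → ∀ R : ℝ, 0 < R →
      (∀ x : ℝ, R ≤ |x| → f x = 0) → ∫ x, f x ∂A = ∫ x, f x ∂B)
    (a : ℝ) : A (Set.Iic a) = B (Set.Iic a) := by
  set c : ℝ → ℝ := fun t => max 0 (min 1 t) with hcdef
  have hc_cont : Continuous c := continuous_const.max (continuous_const.min continuous_id)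
  have hc_mem : ∀ t, 0 ≤ c t ∧ c t ≤ 1 := fun t =>
    ⟨le_max_left _ _, max_le zero_le_one (min_le_left _ _)⟩
  have hc_zero : ∀ t : ℝ, t ≤ 0 → c t = 0 := fun t ht =>
    max_eq_left ((min_le_right _ _).trans ht)
  have hc_one : ∀ t : ℝ, 1 ≤ t → c t = 1 := fun t ht => by
    rw [hcdef]; simp only [min_eq_left ht, max_eq_right zero_le_one]
  set f : ℕ → ℝ → ℝ := fun k x => c ((k + 1) * (a + 1 / (k + 1) - x)) * c (x + (k + 2))
    with hfdef
  have hf_cont : ∀ k, Continuous (f k) := by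
    intro k
    exact (hc_cont.comp (by fun_prop)).mul (hc_cont.comp (by fun_prop))
  have hf_mem : ∀ k x, 0 ≤ f k x ∧ f k x ≤ 1 := by
    intro k x
    constructor
    · exact mul_nonneg (hc_mem _).1 (hc_mem _).1
    · exact mul_le_one₀ (hc_mem _).2 (hc_mem _).1 (hc_mem _).2
  have hf_bound : ∀ k x, |f k x| ≤ 1 := fun k x => by
    rw [abs_of_nonneg (hf_mem k x).1]; exact (hf_mem k x).2
  have hf_supp : ∀ (k : ℕ), ∀ x : ℝ, |a| + ((k:ℝ) + 3) ≤ |x| → f k x = 0 := by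
    intro k x hx
    have hk0 : (0:ℝ) < k + 1 := by positivity
    have hinv : 1 / ((k:ℝ) + 1) ≤ 1 := by
      rw [div_le_one hk0]; linarith
    rcases abs_cases x with ⟨h1, _⟩ | ⟨h1, _⟩
    · -- x ≥ |a| + k + 3 ≥ a + 1/(k+1)
      have : a + 1 / ((k:ℝ) + 1) - x ≤ 0 := by
        have := le_abs_self a; rw [h1] at hx; linarith
      have harg : ((k:ℝ) + 1) * (a + 1 / (k + 1) - x) ≤ 0 :=
        mul_nonpos_of_nonneg_of_nonpos hk0.le this
      simp only [hfdef]
      rw [hc_zero _ harg, zero_mul]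
    · -- x ≤ −(|a| + k + 3)
      have : x + ((k:ℝ) + 2) ≤ 0 := by
        have := abs_nonneg a; rw [h1] at hx; linarith
      simp only [hfdef]
      rw [hc_zero _ this, mul_zero]
  have hf_lim : ∀ x : ℝ, Tendsto (fun k => f k x) atTop
      (nhds (Set.indicator (Set.Iic a) (fun _ => (1:ℝ)) x)) := by
    intro x
    by_cases hx : x ≤ a
    · rw [Set.indicator_of_mem (Set.mem_Iic.mpr hx)]
      refine Tendsto.congr' ?_ tendsto_const_nhds
      filter_upwards [eventually_ge_atTop ⌈|x| + 1⌉₊] with k hk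
      have hcast : (⌈|x| + 1⌉₊ : ℝ) ≤ k := Nat.cast_le.mpr hk
      have h2x : |x| + 1 ≤ (k:ℝ) := le_trans (Nat.le_ceil _) hcast
      have hk0 : (0:ℝ) < k + 1 := by positivity
      have e1 : c (((k:ℝ) + 1) * (a + 1 / (k + 1) - x)) = 1 := by
        refine hc_one _ ?_
        have h3 : ((k:ℝ) + 1) * (a + 1 / (k + 1) - x)
            = (k + 1) * (a - x) + 1 := by field_simp; ring
        rw [h3]
        nlinarith [mul_nonneg hk0.le (sub_nonneg.mpr hx)]
      have e2 : c (x + ((k:ℝ) + 2)) = 1 := by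
        refine hc_one _ ?_
        have := neg_abs_le x; linarith
      simp only [hfdef]
      rw [e1, e2, mul_one]
    · push_neg at hx
      rw [Set.indicator_of_notMem (by simp [Set.mem_Iic]; exact hx)]
      refine Tendsto.congr' ?_ tendsto_const_nhds
      filter_upwards [eventually_ge_atTop ⌈1 / (x - a)⌉₊] with k hk
      have hcast : (⌈1 / (x - a)⌉₊ : ℝ) ≤ k := Nat.cast_le.mpr hk
      have h2x : 1 / (x - a) ≤ (k:ℝ) := le_trans (Nat.le_ceil _) hcast
      have hxa : 0 < x - a := sub_pos.mpr hx
      have harg : ((k:ℝ) + 1) * (a + 1 / (k + 1) - x) ≤ 0 := by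
        have hk0 : (0:ℝ) < k + 1 := by positivity
        have h4 : 1 / ((k:ℝ) + 1) < x - a := by
          rw [div_lt_iff₀ hk0]
          have h5 : 1 / (x - a) * (x - a) = 1 := by field_simp
          nlinarith
        have : a + 1 / ((k:ℝ) + 1) - x ≤ 0 := by linarith
        exact mul_nonpos_of_nonneg_of_nonpos hk0.le this
      simp only [hfdef]
      rw [hc_zero _ harg, zero_mul]
  -- DCT
  have hlim : ∀ (μ : Measure ℝ) [IsFiniteMeasure μ],
      Tendsto (fun k => ∫ x, f k x ∂μ) atTop (nhds ((μ (Set.Iic a)).toReal)) := by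
    intro μ _
    have hind : ∫ x, Set.indicator (Set.Iic a) (fun _ => (1:ℝ)) x ∂μ
        = (μ (Set.Iic a)).toReal := by
      rw [integral_indicator_const (1:ℝ) measurableSet_Iic, smul_eq_mul, mul_one, measureReal_def]
    rw [← hind]
    refine tendsto_integral_of_dominated_convergence (fun _ => (1:ℝ)) ?_ (integrable_const 1) ?_ ?_
    · intro k; exact (hf_cont k).aestronglyMeasurable
    · intro k; exact Eventually.of_forall fun x => by
        rw [Real.norm_eq_abs]; exact hf_bound k x
    · exact Eventually.of_forall hf_lim
  have heq : ∀ k, ∫ x, f k x ∂A = ∫ x, f k x ∂B := by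
    intro k
    exact hcc (f k) (hf_cont k) (hf_bound k) (|a| + ((k:ℝ) + 3)) (by positivity) (hf_supp k)
  have := tendsto_nhds_unique ((funext heq : _) ▸ hlim A) (hlim B)
  exact (ENNReal.toReal_eq_toReal_iff' (measure_ne_top A _) (measure_ne_top B _)).mp this

/-- Injectivity of the two-sided Laplace transform: a finite signed Borel measure `μ` on `ℝ` with
`∫ e^{λx} d|μ| < ∞` for all `λ` and vanishing two-sided Laplace transform is zero. The Laplace
transform of the signed measure is expressed via its Jordan decomposition. -/
theorem stmt_9 (μ : MeasureTheory.SignedMeasure ℝ)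
    (hint : ∀ l : ℝ, Integrable (fun x => Real.exp (l * x)) μ.totalVariation)
    (hlap : ∀ l : ℝ,
      ∫ x, Real.exp (l * x) ∂μ.toJordanDecomposition.posPart
        = ∫ x, Real.exp (l * x) ∂μ.toJordanDecomposition.negPart) :
    μ = 0 := by
  set A := μ.toJordanDecomposition.posPart with hAdef
  set B := μ.toJordanDecomposition.negPart with hBdef
  have hTV : μ.totalVariation = A + B := rfl
  have hA : ∀ l : ℝ, Integrable (fun x => Real.exp (l * x)) A := fun l =>
    (hint l).mono_measure (hTV ▸ Measure.le_add_right le_rfl)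
  have hB : ∀ l : ℝ, Integrable (fun x => Real.exp (l * x)) B := fun l =>
    (hint l).mono_measure (hTV ▸ Measure.le_add_left le_rfl)
  have hcos : ∀ t : ℝ, ∫ x, Real.cos (t * x) ∂A = ∫ x, Real.cos (t * x) ∂B := fun t =>
    (aux_cos_eq hA hB hlap t).1
  have hsin : ∀ t : ℝ, ∫ x, Real.sin (t * x) ∂A = ∫ x, Real.sin (t * x) ∂B := fun t =>
    (aux_cos_eq hA hB hlap t).2
  have hfour : ∀ (T : ℝ), 0 < T → ∀ g : C(AddCircle T, ℂ),
      ∫ x, g (x : AddCircle T) ∂A = ∫ x, g (x : AddCircle T) ∂B := by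
    intro T hT g
    haveI : Fact (0 < T) := ⟨hT⟩
    exact aux_fourier_step hcos hsin g
  have hcc := aux_cc_step hfour
  have hIic : ∀ a : ℝ, A (Set.Iic a) = B (Set.Iic a) :=
    aux_Iic (fun f hf hb R hR hsupp => hcc f hf hb R hR hsupp)
  have hABeq : A = B := MeasureTheory.Measure.ext_of_Iic A B hIic
  have hsub : A.toSignedMeasure - B.toSignedMeasure = 0 := by
    refine VectorMeasure.ext fun s hs => ?_
    rw [VectorMeasure.sub_apply, Measure.toSignedMeasure_apply_measurable hs,
      Measure.toSignedMeasure_apply_measurable hs, hABeq, sub_self, VectorMeasure.zero_apply]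
  calc μ = μ.toJordanDecomposition.toSignedMeasure :=
        (μ.toSignedMeasure_toJordanDecomposition).symm
    _ = A.toSignedMeasure - B.toSignedMeasure := rfl
    _ = 0 := hsub
end

section
/- Let X be a Markov process with the FOED property (function F) and initial law γ, and let Λ_t f(z) = E[f(X_0) | X_t = z] denote the bridge operator. Then for bounded Borel f₀, f₁ and 0 < t₁: E[f₀(X_0) f₁(X_{t₁})] = E[ f₁(X_0) · exp(∫₀^{t₁} F(u,X_0) du) · (Λ_{t₁} f₀)(X_0) ]. -/
open MeasureTheory

/-- For a Markov process `X` with the FOED property and bridge operator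
`Λ_{t₁} f₀ = E[f₀(X_0)|X_{t₁} = ·]` (here a Borel version `L`), one has for bounded Borel
`f₀, f₁` and `t₁ > 0`:
`E[f₀(X_0) f₁(X_{t₁})] = E[f₁(X_0) exp(∫₀^{t₁} F(u,X_0) du) (Λ_{t₁} f₀)(X_0)]`. -/
theorem stmt_11 {Ω : Type*} [MeasurableSpace Ω] (P : Measure Ω) [IsProbabilityMeasure P]
    (X : ℝ → Ω → ℝ) (hX : ∀ t, Measurable (X t))
    (F : ℝ → ℝ → ℝ) (hF : Measurable (Function.uncurry F))
    (hFOED : ∀ g : ℝ → ℝ, Measurable g → (∀ x, 0 ≤ g x) → ∀ t ≥ (0:ℝ),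
      ∫ ω, g (X t ω) ∂P
        = ∫ ω, g (X 0 ω) * Real.exp (∫ u in (0:ℝ)..t, F u (X 0 ω)) ∂P)
    (t₁ : ℝ) (ht₁ : 0 < t₁)
    (f₀ f₁ : ℝ → ℝ) (hf₀ : Measurable f₀) (hf₀b : ∃ C, ∀ x, |f₀ x| ≤ C)
    (hf₁ : Measurable f₁) (hf₁b : ∃ C, ∀ x, |f₁ x| ≤ C)
    (L : ℝ → ℝ) (hL : Measurable L)
    (hLcond : (fun ω => L (X t₁ ω))
        =ᵐ[P] P[(fun ω => f₀ (X 0 ω))|MeasurableSpace.comap (X t₁) (by infer_instance)]) :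
    ∫ ω, f₀ (X 0 ω) * f₁ (X t₁ ω) ∂P
      = ∫ ω, f₁ (X 0 ω) * Real.exp (∫ u in (0:ℝ)..t₁, F u (X 0 ω)) * L (X 0 ω) ∂P := by
  classical
  obtain ⟨C₀', hC₀'⟩ := hf₀b
  obtain ⟨C₁, hC₁⟩ := hf₁b
  set C₀ : ℝ := max C₀' 0 with hC₀def
  have hC₀ : ∀ x, |f₀ x| ≤ C₀ := fun x => le_max_of_le_left (hC₀' x)
  have hC₀0 : 0 ≤ C₀ := le_max_right _ _
  have hC₁0 : 0 ≤ C₁ := (abs_nonneg _).trans (hC₁ 0)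
  -- measurability of the exponent
  have hφ : Measurable fun x : ℝ => ∫ u in (0:ℝ)..t₁, F u x := by
    have h := hF.stronglyMeasurable.integral_prod_left
      (μ := volume.restrict (Set.Ioc (0:ℝ) t₁))
    have heq : (fun x : ℝ => ∫ u in (0:ℝ)..t₁, F u x)
        = fun x => ∫ u in Set.Ioc (0:ℝ) t₁, F u x := by
      funext x; rw [intervalIntegral.integral_of_le ht₁.le]
    rw [heq]; exact h.measurable
  set E : Ω → ℝ := fun ω => Real.exp (∫ u in (0:ℝ)..t₁, F u (X 0 ω)) with hEdef
  have hE : Measurable E := Real.measurable_exp.comp (hφ.comp (hX 0))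
  have hEpos : ∀ ω, 0 < E ω := fun ω => Real.exp_pos _
  -- general integrability of bounded measurable functions
  have hbint : ∀ (h : Ω → ℝ) (C : ℝ), Measurable h → (∀ ω, |h ω| ≤ C) → Integrable h P := by
    intro h C hh hb
    exact (integrable_const C).mono' hh.aestronglyMeasurable
      (Filter.Eventually.of_forall fun ω => by simpa using hb ω)
  -- E is integrable with integral 1
  have h1 := hFOED (fun _ => (1:ℝ)) measurable_const (fun _ => zero_le_one) t₁ ht₁.le
  simp only [one_mul, integral_const, measure_univ, probReal_univ, ENNReal.toReal_one, smul_eq_mul,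
    mul_one] at h1
  have hEint : Integrable E P := by
    by_contra h
    rw [integral_undef h] at h1
    exact one_ne_zero h1
  have hEint1 : (1:ℝ) = ∫ ω, E ω ∂P := h1
  -- the sub-σ-algebra
  have hm : MeasurableSpace.comap (X t₁) (by infer_instance) ≤ _ :=
    measurable_iff_comap_le.mp (hX t₁)
  set m : MeasurableSpace Ω := MeasurableSpace.comap (X t₁) (by infer_instance) with hmdef
  haveI : SigmaFinite (P.trim hm) := IsFiniteMeasure.toSigmaFinite _
  -- tower step
  have hXm : Measurable[m] (X t₁) := measurable_iff_comap_le.mpr le_rfl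
  have hsm : StronglyMeasurable[m] fun ω => f₁ (X t₁ ω) :=
    (hf₁.comp hXm).stronglyMeasurable
  have hf0int : Integrable (fun ω => f₀ (X 0 ω)) P :=
    hbint _ C₀ (hf₀.comp (hX 0)) fun ω => hC₀ _
  have hprodint : Integrable ((fun ω => f₁ (X t₁ ω)) * fun ω => f₀ (X 0 ω)) P := by
    have : Integrable (fun ω => f₁ (X t₁ ω) * f₀ (X 0 ω)) P := by
      refine hbint _ (C₁ * C₀) ((hf₁.comp (hX t₁)).mul (hf₀.comp (hX 0))) fun ω => ?_
      rw [abs_mul]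
      exact mul_le_mul (hC₁ _) (hC₀ _) (abs_nonneg _) hC₁0
    exact this
  have hpull := condExp_mul_of_stronglyMeasurable_left (μ := P) hsm hprodint hf0int
  have tower : ∫ ω, f₀ (X 0 ω) * f₁ (X t₁ ω) ∂P
      = ∫ ω, f₁ (X t₁ ω) * L (X t₁ ω) ∂P := by
    calc ∫ ω, f₀ (X 0 ω) * f₁ (X t₁ ω) ∂P
        = ∫ ω, ((fun ω => f₁ (X t₁ ω)) * fun ω => f₀ (X 0 ω)) ω ∂P := by
          congr 1; funext ω; simp [mul_comm]
      _ = ∫ ω, (P[(fun ω => f₁ (X t₁ ω)) * fun ω => f₀ (X 0 ω)|m]) ω ∂P :=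
          (integral_condExp hm).symm
      _ = ∫ ω, f₁ (X t₁ ω) * (P[(fun ω => f₀ (X 0 ω))|m]) ω ∂P := by
          refine integral_congr_ae (hpull.mono fun ω hω => ?_)
          simpa using hω
      _ = ∫ ω, f₁ (X t₁ ω) * L (X t₁ ω) ∂P := by
          refine integral_congr_ae (hLcond.mono fun ω hω => ?_)
          exact congrArg (fun y => f₁ (X t₁ ω) * y) hω.symm
  -- truncation of L
  set L' : ℝ → ℝ := fun z => max (-C₀) (min (L z) C₀) with hL'def
  have hL' : Measurable L' := measurable_const.max (hL.min measurable_const)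
  have hL'bd : ∀ z, |L' z| ≤ C₀ := by
    intro z
    rw [abs_le]
    constructor
    · exact le_max_left _ _
    · exact max_le (by linarith) (min_le_right _ _)
  have hL'eq : ∀ z, |L z| ≤ C₀ → L' z = L z := by
    intro z hz
    rw [abs_le] at hz
    rw [hL'def]
    simp only []
    rw [min_eq_left hz.2, max_eq_right hz.1]
  -- a.e. bound on L ∘ X t₁
  have hbd : ∀ᵐ ω ∂P, |L (X t₁ ω)| ≤ C₀ := by
    have hb := ae_bdd_condExp_of_ae_bdd (μ := P) (m := m) (R := ⟨C₀, hC₀0⟩)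
      (f := fun ω => f₀ (X 0 ω))
      (Filter.Eventually.of_forall fun ω => hC₀ _)
    filter_upwards [hLcond, hb] with ω h₁ h₂
    rw [h₁]; exact h₂
  have hLt : ∀ᵐ ω ∂P, L' (X t₁ ω) = L (X t₁ ω) :=
    hbd.mono fun ω h => hL'eq _ h
  -- transfer to X 0 via FOED applied to an indicator
  set A : Set ℝ := {z | C₀ < |L z|} with hAdef
  have hA : MeasurableSet A := measurableSet_lt measurable_const hL.abs
  have hInd := hFOED (A.indicator fun _ => (1:ℝ)) (measurable_const.indicator hA)
    (fun x => Set.indicator_nonneg (fun _ _ => zero_le_one) x) t₁ ht₁.le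
  have hIndL : ∫ ω, A.indicator (fun _ => (1:ℝ)) (X t₁ ω) ∂P = 0 := by
    rw [integral_eq_zero_iff_of_nonneg]
    · filter_upwards [hbd] with ω h
      simp only [Pi.zero_apply]
      exact Set.indicator_of_notMem (by simpa [hAdef] using not_lt.mpr h) _
    · exact fun ω => Set.indicator_nonneg (fun _ _ => zero_le_one) _
    · refine hbint _ 1 ((measurable_const.indicator hA).comp (hX t₁)) fun ω => ?_
      rw [abs_of_nonneg (Set.indicator_nonneg (fun _ _ => zero_le_one) _)]
      exact Set.indicator_apply_le' (fun _ => le_rfl) (fun _ => zero_le_one)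
  have hIndR0 : ∫ ω, A.indicator (fun _ => (1:ℝ)) (X 0 ω) * E ω ∂P = 0 :=
    hInd.symm.trans hIndL
  have hnn : ∀ ω, 0 ≤ A.indicator (fun _ => (1:ℝ)) (X 0 ω) * E ω :=
    fun ω => mul_nonneg (Set.indicator_nonneg (fun _ _ => zero_le_one) _) (hEpos ω).le
  have hi : Integrable (fun ω => A.indicator (fun _ => (1:ℝ)) (X 0 ω) * E ω) P := by
    refine hEint.mono'
      ((((measurable_const.indicator hA).comp (hX 0)).mul hE).aestronglyMeasurable) ?_
    refine Filter.Eventually.of_forall fun ω => ?_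
    rw [Real.norm_eq_abs, abs_of_nonneg (hnn ω)]
    calc A.indicator (fun _ => (1:ℝ)) (X 0 ω) * E ω ≤ 1 * E ω := by
          exact mul_le_mul_of_nonneg_right
            (Set.indicator_apply_le' (fun _ => le_rfl) (fun _ => zero_le_one)) (hEpos ω).le
      _ = E ω := one_mul _
  have hIndR : (fun ω => A.indicator (fun _ => (1:ℝ)) (X 0 ω) * E ω) =ᵐ[P] 0 :=
    (integral_eq_zero_iff_of_nonneg (fun ω => hnn ω) hi).mp hIndR0
  have hL0 : ∀ᵐ ω ∂P, L' (X 0 ω) = L (X 0 ω) := by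
    filter_upwards [hIndR] with ω h
    simp only [Pi.zero_apply] at h
    have hz : A.indicator (fun _ => (1:ℝ)) (X 0 ω) = 0 := by
      rcases mul_eq_zero.mp h with h' | h'
      · exact h'
      · exact absurd h' (hEpos ω).ne'
    have hmem : X 0 ω ∉ A := by
      intro hmem
      rw [Set.indicator_of_mem hmem] at hz
      exact one_ne_zero hz
    exact hL'eq _ (not_lt.mp (by simpa [hAdef] using hmem))
  -- final application of FOED with shift
  set M : ℝ := C₁ * C₀ with hMdef
  have hgb : ∀ z, |f₁ z * L' z| ≤ M := fun z => by
    rw [abs_mul]; exact mul_le_mul (hC₁ z) (hL'bd z) (abs_nonneg _) hC₁0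
  have hgnn : ∀ z, 0 ≤ f₁ z * L' z + M := fun z => by
    have := (abs_le.mp (hgb z)).1; linarith
  have h3 : ∫ ω, (f₁ (X t₁ ω) * L' (X t₁ ω) + M) ∂P
      = ∫ ω, (f₁ (X 0 ω) * L' (X 0 ω) + M) * E ω ∂P :=
    hFOED (fun z => f₁ z * L' z + M) ((hf₁.mul hL').add measurable_const) hgnn t₁ ht₁.le
  have hQt : Integrable (fun ω => f₁ (X t₁ ω) * L' (X t₁ ω)) P :=
    hbint _ M ((hf₁.comp (hX t₁)).mul (hL'.comp (hX t₁))) fun ω => hgb _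
  have hQ0E : Integrable (fun ω => f₁ (X 0 ω) * L' (X 0 ω) * E ω) P := by
    refine (hEint.const_mul M).mono'
      (((hf₁.comp (hX 0)).mul (hL'.comp (hX 0))).mul hE).aestronglyMeasurable ?_
    refine Filter.Eventually.of_forall fun ω => ?_
    rw [Real.norm_eq_abs, abs_mul, abs_of_nonneg (hEpos ω).le]
    exact mul_le_mul_of_nonneg_right (hgb _) (hEpos ω).le
  have hLHS : ∫ ω, (f₁ (X t₁ ω) * L' (X t₁ ω) + M) ∂P
      = (∫ ω, f₁ (X t₁ ω) * L' (X t₁ ω) ∂P) + M := by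
    rw [integral_add hQt (integrable_const M), integral_const]
    simp
  have hRHS : ∫ ω, (f₁ (X 0 ω) * L' (X 0 ω) + M) * E ω ∂P
      = (∫ ω, f₁ (X 0 ω) * L' (X 0 ω) * E ω ∂P) + M := by
    have heq : (fun ω => (f₁ (X 0 ω) * L' (X 0 ω) + M) * E ω)
        = fun ω => f₁ (X 0 ω) * L' (X 0 ω) * E ω + M * E ω := by
      funext ω; ring
    rw [heq, integral_add hQ0E (hEint.const_mul M), integral_const_mul, ← hEint1, mul_one]
  have key : ∫ ω, f₁ (X t₁ ω) * L' (X t₁ ω) ∂P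
      = ∫ ω, f₁ (X 0 ω) * L' (X 0 ω) * E ω ∂P := by
    have h4 := h3
    rw [hLHS, hRHS] at h4
    linarith
  calc ∫ ω, f₀ (X 0 ω) * f₁ (X t₁ ω) ∂P
      = ∫ ω, f₁ (X t₁ ω) * L (X t₁ ω) ∂P := tower
    _ = ∫ ω, f₁ (X t₁ ω) * L' (X t₁ ω) ∂P := by
        refine integral_congr_ae (hLt.mono fun ω h => ?_)
        exact congrArg (fun y => f₁ (X t₁ ω) * y) h.symm
    _ = ∫ ω, f₁ (X 0 ω) * L' (X 0 ω) * E ω ∂P := key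
    _ = ∫ ω, f₁ (X 0 ω) * E ω * L (X 0 ω) ∂P := by
        refine integral_congr_ae (hL0.mono fun ω h => ?_)
        show f₁ (X 0 ω) * L' (X 0 ω) * E ω = f₁ (X 0 ω) * E ω * L (X 0 ω)
        rw [h]; ring
end

section
/- Let X be a Feller process on E with generator A and domain D_A, having the FOED property with function F, infinite lifetime, and initial law with full support. Then for every f ∈ D_A and t ≥ 0: E[f(X_t)] = E[ f(X_0) + A f(X_0) · ∫₀ᵗ exp(∫₀ˢ F(u, X_0) du) ds ]. -/
open MeasureTheory

/-- For a Feller process `X` with generator `A` and the FOED property, for `f` in the domain of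
`A` (expressed via the Dynkin formula hypothesis and boundedness of `f` and `Af`):
`E[f(X_t)] = E[f(X_0) + A f(X_0) ∫₀ᵗ exp(∫₀ˢ F(u,X_0) du) ds]`. -/
theorem stmt_17 {Ω E : Type*} [MeasurableSpace Ω] [MeasurableSpace E]
    (P : Measure Ω) [IsProbabilityMeasure P]
    (X : ℝ → Ω → E) (hX : ∀ t, Measurable (X t))
    (F : ℝ → E → ℝ) (hF : Measurable (Function.uncurry F))
    (hFloc : ∀ x : E, ∀ t ≥ (0:ℝ), IntervalIntegrable (fun u => F u x) volume 0 t)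
    (hFOED : ∀ f : E → ℝ, Measurable f → (∃ C, ∀ x, |f x| ≤ C) → ∀ t ≥ (0:ℝ),
      ∫ ω, f (X t ω) ∂P
        = ∫ ω, f (X 0 ω) * Real.exp (∫ u in (0:ℝ)..t, F u (X 0 ω)) ∂P)
    (A : (E → ℝ) → (E → ℝ)) (f : E → ℝ)
    (hf : Measurable f) (hfb : ∃ C, ∀ x, |f x| ≤ C)
    (hAf : Measurable (A f)) (hAfb : ∃ C, ∀ x, |A f x| ≤ C)
    (hDynkin : ∀ t ≥ (0:ℝ),
      ∫ ω, f (X t ω) ∂P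
        = ∫ ω, f (X 0 ω) ∂P + ∫ s in (0:ℝ)..t, ∫ ω, A f (X s ω) ∂P) :
    ∀ t ≥ (0:ℝ),
      ∫ ω, f (X t ω) ∂P
        = ∫ ω, (f (X 0 ω)
            + A f (X 0 ω) *
              ∫ s in (0:ℝ)..t, Real.exp (∫ u in (0:ℝ)..s, F u (X 0 ω))) ∂P := by
  intro t ht
  -- clamp of `s` to `[0, t]`
  set c : ℝ → ℝ := fun s => min (max s 0) t with hc_def
  have hc_cont : Continuous c := (continuous_id.max continuous_const).min continuous_const
  have hc_mem : ∀ s, c s ∈ Set.Icc (0:ℝ) t := fun s =>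
    ⟨le_min (le_max_right _ _) ht, min_le_right _ _⟩
  have hc_eq : ∀ s ∈ Set.Icc (0:ℝ) t, c s = s := by
    intro s hs
    simp [hc_def, max_eq_left hs.1, min_eq_left hs.2]
  -- the (clamped) inner exponent
  set φ : ℝ → E → ℝ := fun s x => ∫ u in (0:ℝ)..(c s), F u x with hφ_def
  have hφ_cont : ∀ x, Continuous fun s => φ s x := by
    intro x
    have hint : MeasureTheory.IntegrableOn (fun u => F u x) (Set.uIcc 0 t) volume := by
      have h1 := hFloc x t ht
      rw [intervalIntegrable_iff_integrableOn_Ioc_of_le ht] at h1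
      rw [Set.uIcc_of_le ht]
      rwa [integrableOn_Icc_iff_integrableOn_Ioc]
    have hcont := intervalIntegral.continuousOn_primitive_interval hint
    exact hcont.comp_continuous hc_cont fun s => by
      rw [Set.uIcc_of_le ht]; exact hc_mem s
  have hφ_meas : ∀ s, Measurable (φ s) := by
    intro s
    have h0 : (0:ℝ) ≤ c s := (hc_mem s).1
    have heq : (fun x => φ s x) = fun x => ∫ u in Set.Ioc (0:ℝ) (c s), F u x := by
      funext x
      exact intervalIntegral.integral_of_le h0
    have hsm : StronglyMeasurable (fun p : E × ℝ => F p.2 p.1) :=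
      (hF.comp measurable_swap).stronglyMeasurable
    have h2 := (hsm.integral_prod_right' (ν := volume.restrict (Set.Ioc 0 (c s)))).measurable
    rw [show (φ s) = (fun x => ∫ u in Set.Ioc (0:ℝ) (c s), F u x) from heq]
    exact h2
  have hφ : Measurable (Function.uncurry φ) :=
    measurable_uncurry_of_continuous_of_measurable hφ_cont hφ_meas
  obtain ⟨C, hC⟩ := hAfb
  -- the exponential factor has expectation 1
  have hexp1 : ∀ s ∈ Set.Icc (0:ℝ) t,
      Integrable (fun ω => Real.exp (∫ u in (0:ℝ)..s, F u (X 0 ω))) P ∧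
      ∫ ω, Real.exp (∫ u in (0:ℝ)..s, F u (X 0 ω)) ∂P = 1 := by
    intro s hs
    have h1 := hFOED (fun _ => 1) measurable_const ⟨1, fun x => by norm_num⟩ s hs.1
    simp only [one_mul, integral_const, measure_univ, ENNReal.toReal_one, smul_eq_mul, probReal_univ,
      mul_one] at h1
    have hint : Integrable (fun ω => Real.exp (∫ u in (0:ℝ)..s, F u (X 0 ω))) P := by
      by_contra hni
      rw [integral_undef hni] at h1
      exact one_ne_zero h1
    exact ⟨hint, h1.symm⟩
  -- the two-variable integrand
  set k : ℝ → Ω → ℝ := fun s ω => A f (X 0 ω) * Real.exp (φ s (X 0 ω)) with hk_def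
  have hk_meas : Measurable (Function.uncurry k) := by
    have h1 : Measurable fun p : ℝ × Ω => A f (X 0 p.2) :=
      hAf.comp ((hX 0).comp measurable_snd)
    have h2' : Measurable fun p : ℝ × Ω => Function.uncurry φ (p.1, X 0 p.2) :=
      hφ.comp (measurable_fst.prodMk ((hX 0).comp measurable_snd))
    have h2 : Measurable fun p : ℝ × Ω => Real.exp (φ p.1 (X 0 p.2)) := h2'.exp
    have heqk : Function.uncurry k
        = fun p : ℝ × Ω => A f (X 0 p.2) * Real.exp (φ p.1 (X 0 p.2)) := rfl
    rw [heqk]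
    exact h1.mul h2
  set μ : Measure ℝ := volume.restrict (Set.Ioc 0 t) with hμ_def
  -- product integrability of `k`
  have hk_int : Integrable (Function.uncurry k) (μ.prod P) := by
    refine ⟨hk_meas.aestronglyMeasurable, ?_⟩
    have hlin : ∫⁻ p, ‖Function.uncurry k p‖₊ ∂(μ.prod P)
        = ∫⁻ s, ∫⁻ ω, ‖k s ω‖₊ ∂P ∂μ :=
      MeasureTheory.lintegral_prod _ hk_meas.nnnorm.coe_nnreal_ennreal.aemeasurable
    have hbound : ∀ s ∈ Set.Ioc (0:ℝ) t, ∫⁻ ω, (‖k s ω‖₊ : ENNReal) ∂P ≤ ENNReal.ofReal C := by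
      intro s hs
      have hs' : s ∈ Set.Icc (0:ℝ) t := ⟨hs.1.le, hs.2⟩
      have hcs : c s = s := hc_eq s hs'
      obtain ⟨hi, hv⟩ := hexp1 s hs'
      have hnn : 0 ≤ᵐ[P] fun ω => Real.exp (∫ u in (0:ℝ)..s, F u (X 0 ω)) :=
        Filter.Eventually.of_forall fun ω => (Real.exp_pos _).le
      have hlg : ∫⁻ ω, ENNReal.ofReal (Real.exp (∫ u in (0:ℝ)..s, F u (X 0 ω))) ∂P = 1 := by
        rw [← MeasureTheory.ofReal_integral_eq_lintegral_ofReal hi hnn, hv, ENNReal.ofReal_one]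
      calc ∫⁻ ω, (‖k s ω‖₊ : ENNReal) ∂P
          ≤ ∫⁻ ω, ENNReal.ofReal C *
              ENNReal.ofReal (Real.exp (∫ u in (0:ℝ)..s, F u (X 0 ω))) ∂P := by
            apply lintegral_mono
            intro ω
            have hk : k s ω = A f (X 0 ω) * Real.exp (∫ u in (0:ℝ)..s, F u (X 0 ω)) := by
              simp only [hk_def, hφ_def, hcs]
            show (‖k s ω‖₊ : ENNReal) ≤ ENNReal.ofReal C *
              ENNReal.ofReal (Real.exp (∫ u in (0:ℝ)..s, F u (X 0 ω)))
            rw [hk, nnnorm_mul, ENNReal.coe_mul]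
            gcongr
            · rw [← enorm_eq_nnnorm, Real.enorm_eq_ofReal_abs]
              exact ENNReal.ofReal_le_ofReal (hC _)
            · rw [← enorm_eq_nnnorm, Real.enorm_eq_ofReal (Real.exp_pos _).le]
        _ = ENNReal.ofReal C * 1 := by
            rw [lintegral_const_mul' _ _ ENNReal.ofReal_ne_top, hlg]
        _ = ENNReal.ofReal C := mul_one _
    calc ∫⁻ p, ‖Function.uncurry k p‖₊ ∂(μ.prod P)
        = ∫⁻ s, ∫⁻ ω, ‖k s ω‖₊ ∂P ∂μ := hlin
      _ ≤ ∫⁻ _, ENNReal.ofReal C ∂μ := by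
          apply lintegral_mono_ae
          filter_upwards [ae_restrict_mem measurableSet_Ioc] with s hs using hbound s hs
      _ = ENNReal.ofReal C * μ Set.univ := by rw [lintegral_const]
      _ < ⊤ := by
          rw [hμ_def, Measure.restrict_apply_univ, Real.volume_Ioc]
          exact ENNReal.mul_lt_top ENNReal.ofReal_lt_top ENNReal.ofReal_lt_top
  have hswap := MeasureTheory.integral_integral_swap hk_int
  -- pointwise identification of the inner `s`-integral
  have hpoint : ∀ ω, (∫ s, k s ω ∂μ)
      = A f (X 0 ω) * ∫ s in (0:ℝ)..t, Real.exp (∫ u in (0:ℝ)..s, F u (X 0 ω)) := by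
    intro ω
    rw [intervalIntegral.integral_of_le ht, ← integral_const_mul]
    apply MeasureTheory.setIntegral_congr_fun measurableSet_Ioc
    intro s hs
    simp only [hk_def, hφ_def, hc_eq s ⟨hs.1.le, hs.2⟩]
  obtain ⟨Cf, hCf⟩ := hfb
  have hfint : Integrable (fun ω => f (X 0 ω)) P :=
    Integrable.mono' (integrable_const Cf) (hf.comp (hX 0)).aestronglyMeasurable
      (Filter.Eventually.of_forall fun ω => by
        simpa [Real.norm_eq_abs] using hCf (X 0 ω))
  have hgint : Integrable (fun ω => A f (X 0 ω) *
      ∫ s in (0:ℝ)..t, Real.exp (∫ u in (0:ℝ)..s, F u (X 0 ω))) P := by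
    have h1 : Integrable (fun ω => ∫ s, Function.uncurry k (s, ω) ∂μ) P :=
      hk_int.integral_prod_right
    exact h1.congr (Filter.Eventually.of_forall fun ω => hpoint ω)
  rw [hDynkin t ht]
  have hstep : (∫ s in (0:ℝ)..t, ∫ ω, A f (X s ω) ∂P)
      = ∫ ω, (A f (X 0 ω) *
          ∫ s in (0:ℝ)..t, Real.exp (∫ u in (0:ℝ)..s, F u (X 0 ω))) ∂P := by
    have h1 : (∫ s in (0:ℝ)..t, ∫ ω, A f (X s ω) ∂P)
        = ∫ s in (0:ℝ)..t, ∫ ω, k s ω ∂P := by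
      apply intervalIntegral.integral_congr
      intro s hs
      rw [Set.uIcc_of_le ht] at hs
      have h2 := hFOED (A f) hAf ⟨C, hC⟩ s hs.1
      simp only [hk_def, hφ_def, hc_eq s hs]
      exact h2
    rw [h1, intervalIntegral.integral_of_le ht]
    rw [show (∫ s in Set.Ioc (0:ℝ) t, ∫ ω, k s ω ∂P) = ∫ s, ∫ ω, k s ω ∂P ∂μ from rfl]
    rw [hswap]
    exact integral_congr_ae (Filter.Eventually.of_forall fun ω => hpoint ω)
  rw [hstep]
  exact (integral_add hfint hgint).symm
end
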